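/- Let F be a field of characteristic 0 and let a, b, p, d₁₁, d₁₂ ∈ F with a ≠ 0 and p ≠ 0. Set W₁₁ := p·(Z₁₁ − d₁₁), Q₁₂ := Z₁₂ − p²·d₁₂, and Rd := d₁₂·Q₁₂² + 4·d₁₁·p²·Z₁₂²·Z₂₁ − 2·d₁₁·p·Z₁₂·W₁₁. If Rd belongs to the ideal I generated by X₁₁·X₂₂ − X₁₂·X₂₁ − 1, then d₁₁ = 0 and d₁₂ = 0. (Non-triviality of the ramified-place relation of Proposition 5.7, Case 1.i.a: membership in I forces d₁₁ = d₁₂ = 0, contradicting invertibility of [α_s]_v.) -/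

import Mathlib

open MvPolynomial

/-! Variables: `X 0 = X₁₁`, `X 1 = X₁₂`, `X 2 = X₂₁`, `X 3 = X₂₂`.
The `Z i j` below are the entries of `adj(Y)·M·Y` where `Y = (Xᵢⱼ)` is the generic
`2×2` matrix and `M = [[a, 0], [b, −a]]`. -/

/-- `Z₁₁ = a·X₁₁·X₂₂ − b·X₁₁·X₁₂ + a·X₁₂·X₂₁`. -/
noncomputable def Z11 (F : Type*) [Field F] (a b : F) : MvPolynomial (Fin 4) F :=
  C a * X 0 * X 3 - C b * X 0 * X 1 + C a * X 1 * X 2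

/-- `Z₁₂ = 2a·X₁₂·X₂₂ − b·X₁₂²`. -/
noncomputable def Z12 (F : Type*) [Field F] (a b : F) : MvPolynomial (Fin 4) F :=
  C (2 * a) * X 1 * X 3 - C b * X 1 ^ 2

/-- `Z₂₁ = b·X₁₁² − 2a·X₁₁·X₂₁`. -/
noncomputable def Z21 (F : Type*) [Field F] (a b : F) : MvPolynomial (Fin 4) F :=
  C b * X 0 ^ 2 - C (2 * a) * X 0 * X 2

/-- The defining ideal of `SL₂`: generated by `X₁₁·X₂₂ − X₁₂·X₂₁ − 1`. -/
noncomputable def sl2Ideal (F : Type*) [Field F] : Ideal (MvPolynomial (Fin 4) F) :=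
  Ideal.span {X 0 * X 3 - X 1 * X 2 - 1}

/-- Non-triviality of the ramified-place relation of Proposition 5.7, Case 1.i.a:
with `W₁₁ := p·(Z₁₁ − d₁₁)`, `Q₁₂ := Z₁₂ − p²·d₁₂`, if
`Rd := d₁₂·Q₁₂² + 4·d₁₁·p²·Z₁₂²·Z₂₁ − 2·d₁₁·p·Z₁₂·W₁₁` lies in the ideal generated
by `X₁₁·X₂₂ − X₁₂·X₂₁ − 1`, then `d₁₁ = 0` and `d₁₂ = 0`. -/
theorem ramified_case1ia (F : Type*) [Field F] [CharZero F] (a b p d11 d12 : F)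
    (ha : a ≠ 0) (hp : p ≠ 0)
    (W11 : MvPolynomial (Fin 4) F) (hW11 : W11 = C p * (Z11 F a b - C d11))
    (Q12 : MvPolynomial (Fin 4) F) (hQ12 : Q12 = Z12 F a b - C (p ^ 2 * d12))
    (Rd : MvPolynomial (Fin 4) F)
    (hRd : Rd = C d12 * Q12 ^ 2 + C (4 * d11 * p ^ 2) * Z12 F a b ^ 2 * Z21 F a b
      - C (2 * d11 * p) * Z12 F a b * W11)
    (hmem : Rd ∈ sl2Ideal F) :
    d11 = 0 ∧ d12 = 0 := by
  subst hRd hQ12 hW11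
  rw [sl2Ideal, Ideal.mem_span_singleton'] at hmem
  obtain ⟨c, hc⟩ := hmem
  have key : ∀ v : Fin 4 → F, v 0 * v 3 - v 1 * v 2 - 1 = 0 →
      d12 * ((2*a*(v 1)*(v 3) - b*(v 1)^2) - p^2*d12)^2
      + 4*d11*p^2 * (2*a*(v 1)*(v 3) - b*(v 1)^2)^2 * (b*(v 0)^2 - 2*a*(v 0)*(v 2))
      - 2*d11*p * (2*a*(v 1)*(v 3) - b*(v 1)^2)
        * (p * ((a*(v 0)*(v 3) - b*(v 0)*(v 1) + a*(v 1)*(v 2)) - d11)) = 0 := by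
    intro v hv
    have h := congrArg (eval v) hc
    simp only [map_mul, map_sub, map_add, map_pow, map_one, eval_C, eval_X,
      Z11, Z12, Z21] at h
    rw [hv, mul_zero] at h
    linear_combination -h
  have h1 := key ![1, 0, 0, 1] (by norm_num [Matrix.cons_val_three])
  have h2 := key ![0, 1, -1, 1 + b/(2*a)] (by simp only [Matrix.cons_val_zero, Matrix.cons_val_one, Matrix.head_cons, Matrix.cons_val_two, Matrix.tail_cons, Matrix.cons_val_three]; ring)
  have h3 := key ![1, 1, b/(2*a), 1 + b/(2*a)] (by simp only [Matrix.cons_val_zero, Matrix.cons_val_one, Matrix.head_cons, Matrix.cons_val_two, Matrix.tail_cons, Matrix.cons_val_three]; ring)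
  simp only [Matrix.cons_val_zero, Matrix.cons_val_one, Matrix.head_cons,
    Matrix.cons_val_two, Matrix.tail_cons, Matrix.cons_val_three] at h1 h2 h3
  have ha2 : (2:F)*a ≠ 0 := mul_ne_zero two_ne_zero ha
  have hd12 : d12 = 0 := by
    have hd3 : d12 ^ 3 * p ^ 4 = 0 := by linear_combination h1
    have : d12 ^ 3 = 0 := (mul_eq_zero.mp hd3).resolve_right (pow_ne_zero _ hp)
    exact pow_eq_zero_iff (by norm_num) |>.mp this
  subst hd12
  field_simp at h2 h3
  refine ⟨?_, rfl⟩
  have h4 : d11 ^ 2 * (16 * a ^ 2 * p ^ 2) = 0 := by linear_combination (2*a) * h2 + (2*a) * h3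
  have h5 : d11 ^ 2 = 0 := (mul_eq_zero.mp h4).resolve_right (by
    simp only [mul_ne_zero_iff]
    exact ⟨⟨by norm_num, pow_ne_zero _ ha⟩, pow_ne_zero _ hp⟩)
  exact pow_eq_zero_iff (by norm_num) |>.mp h5
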